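/- For natural numbers a, b, c, d with a+b ≥ c+d, a ≥ c, b ≥ d, the sum over k from 0 to a of C(a,k)·C(b,d+k)·C(k,c)·C(d+k,d)·H(k) equals C(a+b-c-d, a)·C(a,c)·C(b,d)·(H(a) - H(a+b-c-d) + H(b-d)), where H is the harmonic number. -/

import Mathlib

noncomputable def H (m : ℕ) : ℚ := ∑ j ∈ Finset.range m, (1 : ℚ) / (j + 1)

lemma H_succ (m : ℕ) : H (m + 1) = H m + 1 / (m + 1) := by
  simp [H, Finset.sum_range_succ]

lemma choose_mul_q (n k s : ℕ) (hsk : s ≤ k) :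
    (n.choose k : ℚ) * k.choose s = (n.choose s : ℚ) * (n - s).choose (k - s) := by
  by_cases hkn : k ≤ n
  · exact_mod_cast congrArg (Nat.cast : ℕ → ℚ) (Nat.choose_mul hsk)
  · push_neg at hkn
    rw [Nat.choose_eq_zero_of_lt hkn]
    by_cases hsn : s ≤ n
    · rw [Nat.choose_eq_zero_of_lt (by omega : n - s < k - s)]
      ring
    · rw [Nat.choose_eq_zero_of_lt (by omega : n < s)]
      ring

lemma key (A : ℕ) : ∀ B c : ℕ,
    ∑ j ∈ Finset.range (A + 1), (A.choose j : ℚ) * B.choose (c + j) * H (c + j) =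
    ((A + B).choose (A + c) : ℚ) * (H (A + c) - H (A + B) + H B) := by
  induction A with
  | zero =>
    intro B c
    rw [Finset.sum_range_one]
    simp only [Nat.zero_add, Nat.add_zero, Nat.choose_zero_right, Nat.cast_one]
    ring
  | succ A ih =>
    intro B c
    have step : ∑ j ∈ Finset.range (A + 1 + 1),
          ((A + 1).choose j : ℚ) * B.choose (c + j) * H (c + j)
        = (∑ j ∈ Finset.range (A + 1), (A.choose j : ℚ) * B.choose (c + j) * H (c + j))
          + ∑ j ∈ Finset.range (A + 1),
              (A.choose j : ℚ) * B.choose ((c + 1) + j) * H ((c + 1) + j) := by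
      rw [Finset.sum_range_succ'
        (fun j => ((A + 1).choose j : ℚ) * B.choose (c + j) * H (c + j)) (A + 1)]
      have e : ∀ j, ((A + 1).choose (j + 1) : ℚ) * B.choose (c + (j + 1)) * H (c + (j + 1))
          = (A.choose (j + 1) : ℚ) * B.choose (c + (j + 1)) * H (c + (j + 1))
            + (A.choose j : ℚ) * B.choose ((c + 1) + j) * H ((c + 1) + j) := by
        intro j
        have harg : c + (j + 1) = (c + 1) + j := by omega
        rw [Nat.choose_succ_succ, harg]
        push_cast
        ring
      rw [Finset.sum_congr rfl (fun j _ => e j), Finset.sum_add_distrib]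
      have e2 : (∑ j ∈ Finset.range (A + 1),
            (A.choose (j + 1) : ℚ) * B.choose (c + (j + 1)) * H (c + (j + 1)))
          + ((A + 1).choose 0 : ℚ) * B.choose (c + 0) * H (c + 0)
          = ∑ j ∈ Finset.range (A + 1), (A.choose j : ℚ) * B.choose (c + j) * H (c + j) := by
        rw [show ((A + 1).choose 0 : ℚ) = (A.choose 0 : ℚ) by simp]
        rw [← Finset.sum_range_succ'
          (fun j => (A.choose j : ℚ) * B.choose (c + j) * H (c + j)) (A + 1)]
        rw [Finset.sum_range_succ, Nat.choose_eq_zero_of_lt (by omega : A < A + 1)]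
        simp
      linarith [e2]
    rw [step, ih B c, ih B (c + 1)]
    have hAc : A + 1 + c = (A + c) + 1 := by omega
    have hAB : A + 1 + B = (A + B) + 1 := by omega
    have hc1 : A + (c + 1) = (A + c) + 1 := by omega
    rw [hAc, hAB, hc1, Nat.choose_succ_succ (A + B) (A + c), H_succ (A + c), H_succ (A + B)]
    have h1 : ((A : ℚ) + c + 1) ≠ 0 := by positivity
    have h2 : ((A : ℚ) + B + 1) ≠ 0 := by positivity
    have hrel : ((A : ℚ) + B + 1) * ((A + B).choose (A + c) : ℚ)
        = (((A + B).choose (A + c) : ℚ) + ((A + B).choose (A + c + 1) : ℚ))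
          * ((A : ℚ) + c + 1) := by
      have h := Nat.add_one_mul_choose_eq (A + B) (A + c)
      simp only [Nat.succ_eq_add_one, Nat.choose_succ_succ] at h
      exact_mod_cast h
    have hrel2 : ((A + B).choose (A + c) : ℚ) / ((A : ℚ) + c + 1)
        = (((A + B).choose (A + c) : ℚ) + ((A + B).choose (A + c + 1) : ℚ))
          / ((A : ℚ) + B + 1) := by
      rw [div_eq_div_iff h1 h2]
      linear_combination hrel
    push_cast
    linear_combination -hrel2

theorem stmt_14 (a b c d : ℕ) (h1 : a + b ≥ c + d) (h2 : a ≥ c) (h3 : b ≥ d) :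
    ∑ k ∈ Finset.range (a + 1),
      (a.choose k : ℚ) * b.choose (d + k) * k.choose c * (d + k).choose d * H k =
    ((a + b - c - d).choose a : ℚ) * a.choose c * b.choose d *
      (H a - H (a + b - c - d) + H (b - d)) := by
  set f : ℕ → ℚ := fun k => (a.choose k : ℚ) * b.choose (d + k) * k.choose c * (d + k).choose d * H k with hf
  have hzero : ∀ k < c, f k = 0 := by
    intro k hk
    simp [hf, Nat.choose_eq_zero_of_lt hk]
  have hsplit : ∑ k ∈ Finset.range (a + 1), f k = ∑ k ∈ Finset.Ico c (a + 1), f k := by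
    rw [Finset.range_eq_Ico, ← Finset.sum_Ico_consecutive f (Nat.zero_le c) (by omega)]
    rw [Finset.sum_eq_zero (fun k hk => hzero k (Finset.mem_Ico.mp hk).2)]
    ring
  rw [hsplit, Finset.sum_Ico_eq_sum_range]
  have hac : a + 1 - c = (a - c) + 1 := by omega
  rw [hac]
  have hterm : ∀ j, f (c + j) = (a.choose c : ℚ) * b.choose d *
      (((a - c).choose j : ℚ) * (b - d).choose (c + j) * H (c + j)) := by
    intro j
    have e1 : (a.choose (c + j) : ℚ) * (c + j).choose c
        = (a.choose c : ℚ) * (a - c).choose j := by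
      have := choose_mul_q a (c + j) c (by omega)
      simpa [Nat.add_sub_cancel_left] using this
    have e2 : (b.choose (d + (c + j)) : ℚ) * (d + (c + j)).choose d
        = (b.choose d : ℚ) * (b - d).choose (c + j) := by
      have := choose_mul_q b (d + (c + j)) d (by omega)
      simpa [Nat.add_sub_cancel_left] using this
    calc f (c + j) = ((a.choose (c + j) : ℚ) * (c + j).choose c)
          * ((b.choose (d + (c + j)) : ℚ) * (d + (c + j)).choose d) * H (c + j) := by
            simp only [hf]; ring
      _ = _ := by rw [e1, e2]; ring
  rw [Finset.sum_congr rfl (fun j _ => hterm j), ← Finset.mul_sum, key (a - c) (b - d) c]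
  have e3 : (a - c) + c = a := by omega
  have e4 : (a - c) + (b - d) = a + b - c - d := by omega
  rw [e3, e4]
  ring
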